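/- For 0 < ρ < 1 and c_0, c_1 > 0, the inequality √(1 − ρ²) + √((c_1/c_0) ρ²) < 1 holds if and only if 2√((1 − ρ²)/ρ²) < (c_0 − c_1)/√(c_0 c_1). -/

import Mathlib

/-- For `0 < ρ < 1` and `c₀, c₁ > 0`, the inequality
`√(1 − ρ²) + √((c₁/c₀) ρ²) < 1` holds if and only if
`2 √((1 − ρ²)/ρ²) < (c₀ − c₁)/√(c₀ c₁)`. -/
theorem bifidelity_condition_iff (ρ c₀ c₁ : ℝ)
    (hρ0 : 0 < ρ) (hρ1 : ρ < 1) (hc₀ : 0 < c₀) (hc₁ : 0 < c₁) :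
    Real.sqrt (1 - ρ ^ 2) + Real.sqrt (c₁ / c₀ * ρ ^ 2) < 1 ↔
      2 * Real.sqrt ((1 - ρ ^ 2) / ρ ^ 2) < (c₀ - c₁) / Real.sqrt (c₀ * c₁) := by
  have h1 : (0:ℝ) ≤ 1 - ρ ^ 2 := by nlinarith
  set s := Real.sqrt (1 - ρ ^ 2) with hsdef
  have hs2 : s ^ 2 = 1 - ρ ^ 2 := Real.sq_sqrt h1
  have hs0 : 0 ≤ s := Real.sqrt_nonneg _
  have hq : Real.sqrt (c₁ / c₀ * ρ ^ 2) = Real.sqrt (c₁ / c₀) * ρ := by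
    rw [Real.sqrt_mul (by positivity), Real.sqrt_sq hρ0.le]
  set q := Real.sqrt (c₁ / c₀) with hqdef
  have hq0 : 0 < q := Real.sqrt_pos.2 (by positivity)
  have hq2 : q ^ 2 = c₁ / c₀ := Real.sq_sqrt (by positivity)
  have hq2' : q ^ 2 * c₀ = c₁ := by rw [hq2]; field_simp
  have hdiv : Real.sqrt ((1 - ρ ^ 2) / ρ ^ 2) = s / ρ := by
    rw [Real.sqrt_div h1, Real.sqrt_sq hρ0.le]
  have hcc : Real.sqrt (c₀ * c₁) = c₀ * q := by
    rw [show c₀ * c₁ = c₀ ^ 2 * (c₁ / c₀) by field_simp,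
      Real.sqrt_mul (by positivity), Real.sqrt_sq hc₀.le]
  rw [hq, hdiv, hcc, mul_div_assoc' 2 s ρ, div_lt_div_iff₀ hρ0 (by positivity)]
  constructor
  · intro h
    have h2 : (s + q * ρ) ^ 2 < 1 := by
      have := pow_lt_one₀ (a := s + q * ρ) (by positivity) h two_ne_zero
      linarith
    nlinarith [mul_pos hρ0 hc₀, mul_pos hρ0 hq0, sq_nonneg ρ]
  · intro h
    have h2 : (s + q * ρ) ^ 2 < 1 := by nlinarith [mul_pos hρ0 hq0, mul_pos hρ0 hc₀]
    nlinarith [sq_nonneg (s + q * ρ - 1), mul_pos hq0 hρ0]
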